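/- (Tauberian inequality.) Let (aₖ)_{k≥0} be a bounded real sequence. Then liminf_{n→∞} (1/n) Σ_{k=0}^{n−1} aₖ ≤ liminf_{β↑1} (1−β) Σ_{k=0}^{∞} βᵏ aₖ ≤ limsup_{β↑1} (1−β) Σ_{k=0}^{∞} βᵏ aₖ ≤ limsup_{n→∞} (1/n) Σ_{k=0}^{n−1} aₖ. -/

import Mathlib

open Filter Topology

lemma my_limsup_neg {α : Type*} (f : α → ℝ) (l : Filter α) :
    limsup (fun x => -(f x)) l = - liminf f l := by
  rw [limsup, liminf, limsSup, limsInf, Real.sInf_def]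
  refine neg_inj.mpr (congrArg sSup ?_)
  ext x
  simp only [Set.mem_neg, Set.mem_setOf_eq, eventually_map, neg_le_neg_iff]

lemma my_le_of_forall_pos (x y : ℝ) (h : ∀ ε : ℝ, 0 < ε → x ≤ y + ε) : x ≤ y := by
  by_contra hlt
  push_neg at hlt
  have := h ((x - y)/2) (by linarith)
  linarith

section aux
variable (a : ℕ → ℝ) (C : ℝ)

lemma sum1 (hC : ∀ k, |a k| ≤ C) {β : ℝ} (hβ : β ∈ Set.Ioo (0:ℝ) 1) :
    Summable (fun k : ℕ => β ^ k * a k) := by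
  refine Summable.of_norm_bounded
    ((summable_geometric_of_lt_one hβ.1.le hβ.2).mul_left C) (fun k => ?_)
  rw [Real.norm_eq_abs, abs_mul, abs_pow, abs_of_pos hβ.1, mul_comm]
  exact mul_le_mul_of_nonneg_right (hC k) (pow_nonneg hβ.1.le k)

lemma sumw {β : ℝ} (hβ : β ∈ Set.Ioo (0:ℝ) 1) :
    Summable (fun n : ℕ => ((n : ℝ) + 1) * β ^ n) := by
  have h1 : Summable (fun n : ℕ => (n : ℝ) * β ^ n) := by
    have := summable_pow_mul_geometric_of_norm_lt_one (R := ℝ) 1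
      (r := β) (by rw [Real.norm_eq_abs, abs_of_pos hβ.1]; exact hβ.2)
    simpa using this
  simpa [add_mul] using h1.add (summable_geometric_of_lt_one hβ.1.le hβ.2)

lemma sumw_eq {β : ℝ} (hβ : β ∈ Set.Ioo (0:ℝ) 1) :
    ∑' n : ℕ, ((n : ℝ) + 1) * β ^ n = 1 / (1 - β) ^ 2 := by
  have hβ1 : β < 1 := hβ.2
  have hne : (1 : ℝ) - β ≠ 0 := by linarith
  have h1 : ∑' n : ℕ, (n : ℝ) * β ^ n = β / (1 - β) ^ 2 :=
    tsum_coe_mul_geometric_of_norm_lt_one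
      (by rw [Real.norm_eq_abs, abs_of_pos hβ.1]; exact hβ.2)
  have h2 : ∑' n : ℕ, β ^ n = (1 - β)⁻¹ := tsum_geometric_of_lt_one hβ.1.le hβ.2
  have h3 : Summable (fun n : ℕ => (n : ℝ) * β ^ n) := by
    have := summable_pow_mul_geometric_of_norm_lt_one (R := ℝ) 1
      (r := β) (by rw [Real.norm_eq_abs, abs_of_pos hβ.1]; exact hβ.2)
    simpa using this
  have h4 : Summable (fun n : ℕ => β ^ n) := summable_geometric_of_lt_one hβ.1.le hβ.2
  calc ∑' n : ℕ, ((n : ℝ) + 1) * β ^ n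
      = ∑' n : ℕ, ((n : ℝ) * β ^ n + β ^ n) := by congr 1; ext n; ring
    _ = β / (1 - β) ^ 2 + (1 - β)⁻¹ := by rw [Summable.tsum_add h3 h4, h1, h2]
    _ = 1 / (1 - β) ^ 2 := by field_simp; ring

end aux

section aux2
variable (a : ℕ → ℝ) (C : ℝ)

lemma sumS (hC : ∀ k, |a k| ≤ C) {β : ℝ} (hβ : β ∈ Set.Ioo (0:ℝ) 1) :
    Summable (fun n : ℕ => β ^ n * ∑ k ∈ Finset.range (n + 1), a k) := by
  refine Summable.of_norm_bounded
    ((sumw hβ).mul_left C) (fun n => ?_)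
  rw [Real.norm_eq_abs, abs_mul, abs_pow, abs_of_pos hβ.1]
  have h1 : |∑ k ∈ Finset.range (n + 1), a k| ≤ ((n : ℝ) + 1) * C := by
    calc |∑ k ∈ Finset.range (n + 1), a k| ≤ ∑ k ∈ Finset.range (n + 1), |a k| :=
          Finset.abs_sum_le_sum_abs _ _
      _ ≤ ∑ _k ∈ Finset.range (n + 1), C := Finset.sum_le_sum fun k _ => hC k
      _ = ((n : ℝ) + 1) * C := by simp [mul_comm]
  have hb : (0:ℝ) ≤ β ^ n := pow_nonneg hβ.1.le n
  calc β ^ n * |∑ k ∈ Finset.range (n + 1), a k| ≤ β ^ n * (((n : ℝ) + 1) * C) :=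
        mul_le_mul_of_nonneg_left h1 hb
    _ = C * (((n : ℝ) + 1) * β ^ n) := by ring

lemma sumS' (hC : ∀ k, |a k| ≤ C) {β : ℝ} (hβ : β ∈ Set.Ioo (0:ℝ) 1) :
    Summable (fun n : ℕ => β ^ n * ∑ k ∈ Finset.range n, a k) := by
  refine Summable.of_norm_bounded
    ((sumw hβ).mul_left C) (fun n => ?_)
  rw [Real.norm_eq_abs, abs_mul, abs_pow, abs_of_pos hβ.1]
  have h1 : |∑ k ∈ Finset.range n, a k| ≤ ((n : ℝ) + 1) * C := by
    have hC0 : 0 ≤ C := (abs_nonneg _).trans (hC 0)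
    calc |∑ k ∈ Finset.range n, a k| ≤ ∑ k ∈ Finset.range n, |a k| :=
          Finset.abs_sum_le_sum_abs _ _
      _ ≤ ∑ _k ∈ Finset.range n, C := Finset.sum_le_sum fun k _ => hC k
      _ = (n : ℝ) * C := by simp [mul_comm]
      _ ≤ ((n : ℝ) + 1) * C := by nlinarith
  have hb : (0:ℝ) ≤ β ^ n := pow_nonneg hβ.1.le n
  calc β ^ n * |∑ k ∈ Finset.range n, a k| ≤ β ^ n * (((n : ℝ) + 1) * C) :=
        mul_le_mul_of_nonneg_left h1 hb
    _ = C * (((n : ℝ) + 1) * β ^ n) := by ring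

lemma tsum_id (hC : ∀ k, |a k| ≤ C) {β : ℝ} (hβ : β ∈ Set.Ioo (0:ℝ) 1) :
    ∑' k : ℕ, β ^ k * a k
      = (1 - β) * ∑' n : ℕ, β ^ n * ∑ k ∈ Finset.range (n + 1), a k := by
  set T := ∑' n : ℕ, β ^ n * ∑ k ∈ Finset.range (n + 1), a k with hT
  have h0 : ∑' n : ℕ, β ^ n * ∑ k ∈ Finset.range n, a k = β * T := by
    rw [Summable.tsum_eq_zero_add (sumS' a C hC hβ)]
    simp only [pow_zero, Finset.range_zero, Finset.sum_empty, mul_zero, zero_add]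
    rw [hT, ← tsum_mul_left]
    congr 1; ext n; ring
  have hsub := Summable.tsum_sub (sumS a C hC hβ) (sumS' a C hC hβ)
  have : T - β * T = ∑' k : ℕ, β ^ k * a k := by
    rw [← h0, hT, ← hsub]
    congr 1; ext n
    rw [Finset.sum_range_succ]
    ring
  rw [sub_mul, one_mul]
  linarith [this]
end aux2

section key
variable (a : ℕ → ℝ) (C : ℝ)

lemma sigma_abs (hC : ∀ k, |a k| ≤ C) (n : ℕ) :
    |(1 / (n : ℝ)) * ∑ k ∈ Finset.range n, a k| ≤ C := by
  have hC0 : 0 ≤ C := (abs_nonneg _).trans (hC 0)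
  rcases Nat.eq_zero_or_pos n with h | h
  · simp [h, hC0]
  · have hn : (0:ℝ) < n := by exact_mod_cast h
    rw [abs_mul, abs_of_pos (by positivity : (0:ℝ) < 1 / n)]
    have h1 : |∑ k ∈ Finset.range n, a k| ≤ (n : ℝ) * C := by
      calc |∑ k ∈ Finset.range n, a k| ≤ ∑ k ∈ Finset.range n, |a k| :=
            Finset.abs_sum_le_sum_abs _ _
        _ ≤ ∑ _k ∈ Finset.range n, C := Finset.sum_le_sum fun k _ => hC k
        _ = (n : ℝ) * C := by simp [mul_comm]
    calc (1 / (n:ℝ)) * |∑ k ∈ Finset.range n, a k| ≤ (1 / (n:ℝ)) * ((n:ℝ) * C) :=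
          mul_le_mul_of_nonneg_left h1 (by positivity)
      _ = C := by field_simp

lemma key_est (hC : ∀ k, |a k| ≤ C) {β : ℝ} (hβ : β ∈ Set.Ioo (0:ℝ) 1)
    (c : ℝ) (N : ℕ)
    (hc : ∀ n, N ≤ n → (1 / (n : ℝ)) * ∑ k ∈ Finset.range n, a k ≤ c) :
    (1 - β) * ∑' k : ℕ, β ^ k * a k
      ≤ c + (1 - β) ^ 2 * ((N : ℝ) * ((N : ℝ) * (C + |c|))) := by
  set σ : ℕ → ℝ := fun n => (1 / (n : ℝ)) * ∑ k ∈ Finset.range n, a k with hσdef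
  set g : ℕ → ℝ := fun n => ((n : ℝ) + 1) * β ^ n * (σ (n + 1) - c) with hgdef
  have hgeq : g = fun n => β ^ n * (∑ k ∈ Finset.range (n + 1), a k)
      - c * (((n : ℝ) + 1) * β ^ n) := by
    funext n
    have hn1 : ((n : ℝ) + 1) ≠ 0 := by positivity
    simp only [hgdef, hσdef]
    push_cast
    field_simp
  have hgsum : Summable g := by
    rw [hgeq]
    exact (sumS a C hC hβ).sub ((sumw hβ).mul_left c)
  -- main identity
  have hid : (1 - β) * ∑' k : ℕ, β ^ k * a k = c + (1 - β) ^ 2 * ∑' n, g n := by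
    have hne : ((1:ℝ) - β) ^ 2 ≠ 0 := by
      have : (1:ℝ) - β ≠ 0 := by have := hβ.2; intro h; linarith
      positivity
    have h1 : ∑' n, g n
        = (∑' n : ℕ, β ^ n * ∑ k ∈ Finset.range (n + 1), a k)
          - c * (1 / (1 - β) ^ 2) := by
      rw [hgeq, Summable.tsum_sub (sumS a C hC hβ) ((sumw hβ).mul_left c), tsum_mul_left,
        sumw_eq hβ]
    rw [tsum_id a C hC hβ, h1]
    have hc' : (1 - β) ^ 2 * (c * (1 / (1 - β) ^ 2)) = c := by
      rw [mul_left_comm, mul_one_div_cancel hne, mul_one]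
    rw [mul_sub, hc']
    ring
  rw [hid]
  -- now bound the tsum
  have hsplit := (Summable.sum_add_tsum_nat_add N hgsum).symm
  have htail : ∑' n : ℕ, g (n + N) ≤ 0 := by
    have := Summable.tsum_le_tsum (f := fun n : ℕ => g (n + N)) (g := fun _ => (0:ℝ))
      (fun n => ?_) (hgsum.comp_injective (add_left_injective N)) summable_zero
    · simpa using this
    · have hσc : σ (n + N + 1) - c ≤ 0 := by
        have := hc (n + N + 1) (by omega)
        simpa [hσdef] using sub_nonpos.mpr this
      have hnn : (0:ℝ) ≤ ((n + N : ℕ) : ℝ) + 1 := by positivity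
      have hpw : (0:ℝ) ≤ β ^ (n + N) := pow_nonneg hβ.1.le _
      simp only [hgdef]
      exact mul_nonpos_of_nonneg_of_nonpos (by positivity) hσc
  have hhead : ∑ n ∈ Finset.range N, g n ≤ (N : ℝ) * ((N : ℝ) * (C + |c|)) := by
    have hb : ∀ n ∈ Finset.range N, g n ≤ (N : ℝ) * (C + |c|) := by
      intro n hn
      have hnN : (n : ℝ) + 1 ≤ (N : ℝ) := by
        have : n < N := Finset.mem_range.mp hn
        exact_mod_cast Nat.succ_le_of_lt this
      have hpw : β ^ n ≤ 1 := pow_le_one₀ hβ.1.le hβ.2.le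
      have hpw0 : (0:ℝ) ≤ β ^ n := pow_nonneg hβ.1.le n
      have hσb : σ (n + 1) - c ≤ C + |c| := by
        have h1 : σ (n + 1) ≤ C := (le_abs_self _).trans (sigma_abs a C hC (n + 1))
        have h2 : -c ≤ |c| := neg_le_abs c
        linarith
      have hCc : (0:ℝ) ≤ C + |c| := by
        have hC0 : 0 ≤ C := (abs_nonneg _).trans (hC 0)
        positivity
      have h3 : ((n : ℝ) + 1) * β ^ n ≤ (N : ℝ) := by
        calc ((n : ℝ) + 1) * β ^ n ≤ ((n : ℝ) + 1) * 1 :=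
              mul_le_mul_of_nonneg_left hpw (by positivity)
          _ = (n : ℝ) + 1 := mul_one _
          _ ≤ (N : ℝ) := hnN
      calc g n = ((n : ℝ) + 1) * β ^ n * (σ (n + 1) - c) := rfl
        _ ≤ ((n : ℝ) + 1) * β ^ n * (C + |c|) :=
            mul_le_mul_of_nonneg_left hσb (by positivity)
        _ ≤ (N : ℝ) * (C + |c|) := mul_le_mul_of_nonneg_right h3 hCc
    calc ∑ n ∈ Finset.range N, g n ≤ ∑ _n ∈ Finset.range N, (N : ℝ) * (C + |c|) :=
          Finset.sum_le_sum hb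
      _ = (N : ℝ) * ((N : ℝ) * (C + |c|)) := by simp [mul_comm, mul_assoc]
  have htsum : ∑' n, g n ≤ (N : ℝ) * ((N : ℝ) * (C + |c|)) := by
    rw [hsplit]
    linarith
  have hsq : (0:ℝ) ≤ (1 - β) ^ 2 := sq_nonneg _
  nlinarith [mul_le_mul_of_nonneg_left htsum hsq]
end key

section main
variable (a : ℕ → ℝ) (C : ℝ)

lemma F_abs_le (hC : ∀ k, |a k| ≤ C) {β : ℝ} (hβ : β ∈ Set.Ioo (0:ℝ) 1) :
    |(1 - β) * ∑' k : ℕ, β ^ k * a k| ≤ C := by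
  have hC0 : 0 ≤ C := (abs_nonneg _).trans (hC 0)
  have hne : (0:ℝ) < 1 - β := by have := hβ.2; linarith
  have hsn : Summable (fun k : ℕ => ‖β ^ k * a k‖) := by
    refine Summable.of_nonneg_of_le (fun k => norm_nonneg _) (fun k => ?_)
      ((summable_geometric_of_lt_one hβ.1.le hβ.2).mul_left C)
    rw [Real.norm_eq_abs, abs_mul, abs_pow, abs_of_pos hβ.1, mul_comm]
    exact mul_le_mul_of_nonneg_right (hC k) (pow_nonneg hβ.1.le k)
  have h1 : |∑' k : ℕ, β ^ k * a k| ≤ C * (1 - β)⁻¹ := by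
    calc |∑' k : ℕ, β ^ k * a k| ≤ ∑' k : ℕ, ‖β ^ k * a k‖ :=
          norm_tsum_le_tsum_norm hsn
      _ ≤ ∑' k : ℕ, C * β ^ k := by
          refine Summable.tsum_le_tsum (fun k => ?_) hsn
            ((summable_geometric_of_lt_one hβ.1.le hβ.2).mul_left C)
          rw [Real.norm_eq_abs, abs_mul, abs_pow, abs_of_pos hβ.1, mul_comm]
          exact mul_le_mul_of_nonneg_right (hC k) (pow_nonneg hβ.1.le k)
      _ = C * (1 - β)⁻¹ := by rw [tsum_mul_left, tsum_geometric_of_lt_one hβ.1.le hβ.2]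
  rw [abs_mul, abs_of_pos hne]
  calc (1 - β) * |∑' k : ℕ, β ^ k * a k| ≤ (1 - β) * (C * (1 - β)⁻¹) :=
        mul_le_mul_of_nonneg_left h1 hne.le
    _ = C := by field_simp

lemma abel_le_cesaro (hC : ∀ k, |a k| ≤ C) :
    limsup (fun β : ℝ => (1 - β) * ∑' k : ℕ, β ^ k * a k) (𝓝[Set.Ioo (0:ℝ) 1] 1) ≤
      limsup (fun n : ℕ => (1 / (n : ℝ)) * ∑ k ∈ Finset.range n, a k) atTop := by
  haveI : (𝓝[Set.Ioo (0:ℝ) 1] (1:ℝ)).NeBot :=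
    right_nhdsWithin_Ioo_neBot (by norm_num : (0:ℝ) < 1)
  set σ : ℕ → ℝ := fun n => (1 / (n : ℝ)) * ∑ k ∈ Finset.range n, a k with hσdef
  set L := limsup σ atTop with hL
  have hbσ : IsBoundedUnder (· ≤ ·) atTop σ :=
    isBoundedUnder_of ⟨C, fun n => (le_abs_self _).trans (sigma_abs a C hC n)⟩
  refine my_le_of_forall_pos _ _ (fun ε hε => ?_)
  have h1 : limsup σ atTop < L + ε / 2 := by rw [← hL]; linarith
  obtain ⟨N, hN⟩ := eventually_atTop.mp (eventually_lt_of_limsup_lt h1 hbσ)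
  set c := L + ε / 2 with hc
  set M := (N : ℝ) * ((N : ℝ) * (C + |c|)) with hM
  have hMtendsto : Tendsto (fun β : ℝ => (1 - β) ^ 2 * M) (𝓝[Set.Ioo (0:ℝ) 1] 1)
      (𝓝 0) := by
    have hcont : Tendsto (fun β : ℝ => (1 - β) ^ 2 * M) (𝓝 1) (𝓝 ((1 - 1) ^ 2 * M)) := by
      exact (continuous_const.sub continuous_id).pow 2 |>.mul continuous_const |>.tendsto 1
    simpa using hcont.mono_left nhdsWithin_le_nhds
  have hev1 : ∀ᶠ β in 𝓝[Set.Ioo (0:ℝ) 1] (1:ℝ), (1 - β) ^ 2 * M < ε / 2 :=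
    hMtendsto.eventually_lt_const (by linarith)
  have hev2 : ∀ᶠ β in 𝓝[Set.Ioo (0:ℝ) 1] (1:ℝ), β ∈ Set.Ioo (0:ℝ) 1 :=
    eventually_mem_nhdsWithin
  have hev : ∀ᶠ β in 𝓝[Set.Ioo (0:ℝ) 1] (1:ℝ),
      (1 - β) * ∑' k : ℕ, β ^ k * a k ≤ L + ε := by
    filter_upwards [hev1, hev2] with β h1' h2'
    have := key_est a C hC h2' c N (fun n hn => (hN n hn).le)
    rw [← hM] at this
    rw [hc] at this
    linarith
  refine limsup_le_of_le ?_ hev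
  exact isCoboundedUnder_le_of_eventually_le _
    (hev2.mono fun β hβ => neg_le_of_abs_le (F_abs_le a C hC hβ))
end main

/-- Tauberian inequality: for a bounded real sequence `(aₖ)`,
`liminf_n (1/n) Σ_{k<n} aₖ ≤ liminf_{β↑1} (1−β) Σ βᵏ aₖ
  ≤ limsup_{β↑1} (1−β) Σ βᵏ aₖ ≤ limsup_n (1/n) Σ_{k<n} aₖ`,
limits in `β` taken along `β ∈ (0,1)`, `β → 1`. -/
theorem tauberian_inequality (a : ℕ → ℝ) (C : ℝ) (hC : ∀ k, |a k| ≤ C) :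
    liminf (fun n : ℕ => (1 / (n : ℝ)) * ∑ k ∈ Finset.range n, a k) atTop ≤
        liminf (fun β : ℝ => (1 - β) * ∑' k : ℕ, β ^ k * a k) (𝓝[Set.Ioo (0:ℝ) 1] 1) ∧
      liminf (fun β : ℝ => (1 - β) * ∑' k : ℕ, β ^ k * a k) (𝓝[Set.Ioo (0:ℝ) 1] 1) ≤
        limsup (fun β : ℝ => (1 - β) * ∑' k : ℕ, β ^ k * a k) (𝓝[Set.Ioo (0:ℝ) 1] 1) ∧
      limsup (fun β : ℝ => (1 - β) * ∑' k : ℕ, β ^ k * a k) (𝓝[Set.Ioo (0:ℝ) 1] 1) ≤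
        limsup (fun n : ℕ => (1 / (n : ℝ)) * ∑ k ∈ Finset.range n, a k) atTop := by
  haveI : (𝓝[Set.Ioo (0:ℝ) 1] (1:ℝ)).NeBot :=
    right_nhdsWithin_Ioo_neBot (by norm_num : (0:ℝ) < 1)
  have hev2 : ∀ᶠ β in 𝓝[Set.Ioo (0:ℝ) 1] (1:ℝ), β ∈ Set.Ioo (0:ℝ) 1 :=
    eventually_mem_nhdsWithin
  refine ⟨?_, ?_, abel_le_cesaro a C hC⟩
  · have key := abel_le_cesaro (fun k => -(a k)) C (by intro k; simpa using hC k)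
    have hFneg : (fun β : ℝ => (1 - β) * ∑' k : ℕ, β ^ k * (-(a k)))
        = fun β : ℝ => -((1 - β) * ∑' k : ℕ, β ^ k * a k) := by
      funext β
      simp [mul_neg, tsum_neg]
    have hσneg : (fun n : ℕ => (1 / (n : ℝ)) * ∑ k ∈ Finset.range n, (-(a k)))
        = fun n : ℕ => -((1 / (n : ℝ)) * ∑ k ∈ Finset.range n, a k) := by
      funext n
      simp [Finset.sum_neg_distrib, mul_neg]
    rw [hFneg, hσneg, my_limsup_neg, my_limsup_neg] at key
    linarith
  · refine liminf_le_limsup ?_ ?_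
    · exact ⟨C, eventually_map.mpr
        (hev2.mono fun β hβ => le_of_abs_le (F_abs_le a C hC hβ))⟩
    · exact ⟨-C, eventually_map.mpr
        (hev2.mono fun β hβ => neg_le_of_abs_le (F_abs_le a C hC hβ))⟩
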